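/- Define the index GCI'(A) = ∑_{i<j<k} (ln(a_ij a_jk a_ki))^2 for an n×n positive reciprocal matrix A (n ≥ 3). Then GCI' is strongly upper bounded: for any positive reciprocal matrices A_1,...,A_m and weights λ_h ≥ 0 with ∑ λ_h = 1, GCI'(A*) ≤ ∑_h λ_h GCI'(A_h), where A* is the entry-wise weighted geometric mean. -/

import Mathlib

noncomputable def GCI' (n : ℕ) (A : Fin n → Fin n → ℝ) : ℝ :=
  ∑ i : Fin n, ∑ j : Fin n, ∑ k : Fin n,
    if i < j ∧ j < k then (Real.log (A i j * A j k * A k i)) ^ 2 else 0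

theorem stmt_12 (n m : ℕ) (hn : 3 ≤ n) (A : Fin m → Fin n → Fin n → ℝ)
    (hpos : ∀ h i j, 0 < A h i j) (hrec : ∀ h i j, A h i j * A h j i = 1)
    (l : Fin m → ℝ) (hl : ∀ h, 0 ≤ l h) (hsum : ∑ h, l h = 1) :
    GCI' n (fun i j => ∏ h, (A h i j) ^ (l h)) ≤
      ∑ h, l h * GCI' n (A h) := by
  unfold GCI'
  have hrw : ∀ h : Fin m, l h * ∑ i : Fin n, ∑ j : Fin n, ∑ k : Fin n,
      (if i < j ∧ j < k then (Real.log (A h i j * A h j k * A h k i)) ^ 2 else 0)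
      = ∑ i : Fin n, ∑ j : Fin n, ∑ k : Fin n,
      (if i < j ∧ j < k then l h * (Real.log (A h i j * A h j k * A h k i)) ^ 2 else 0) := by
    intro h
    simp_rw [Finset.mul_sum, mul_ite, mul_zero]
  simp_rw [hrw]
  have hcomm : ∀ (F : Fin m → Fin n → Fin n → Fin n → ℝ),
      ∑ h, ∑ i, ∑ j, ∑ k, F h i j k = ∑ i : Fin n, ∑ j : Fin n, ∑ k : Fin n, ∑ h, F h i j k := by
    intro F
    rw [Finset.sum_comm]
    exact Finset.sum_congr rfl fun i _ => by
      rw [Finset.sum_comm]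
      exact Finset.sum_congr rfl fun j _ => by rw [Finset.sum_comm]
  rw [hcomm]
  refine Finset.sum_le_sum fun i _ => ?_
  refine Finset.sum_le_sum fun j _ => ?_
  refine Finset.sum_le_sum fun k _ => ?_
  by_cases hc : i < j ∧ j < k
  · simp only [if_pos hc]
    have hP : ∀ a b : Fin n, 0 < ∏ h, A h a b ^ l h :=
      fun a b => Finset.prod_pos fun h _ => Real.rpow_pos_of_pos (hpos h a b) _
    have hlog : Real.log ((∏ h, A h i j ^ l h) * (∏ h, A h j k ^ l h) * (∏ h, A h k i ^ l h))
        = ∑ h, l h * Real.log (A h i j * A h j k * A h k i) := by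
      rw [Real.log_mul (mul_pos (hP i j) (hP j k)).ne' (hP k i).ne',
        Real.log_mul (hP i j).ne' (hP j k).ne',
        Real.log_prod (fun h _ => (Real.rpow_pos_of_pos (hpos h i j) _).ne'),
        Real.log_prod (fun h _ => (Real.rpow_pos_of_pos (hpos h j k) _).ne'),
        Real.log_prod (fun h _ => (Real.rpow_pos_of_pos (hpos h k i) _).ne')]
      simp_rw [Real.log_rpow (hpos _ _ _),
        Real.log_mul (mul_pos (hpos _ i j) (hpos _ j k)).ne' (hpos _ k i).ne',
        Real.log_mul (hpos _ i j).ne' (hpos _ j k).ne', mul_add]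
      rw [← Finset.sum_add_distrib, ← Finset.sum_add_distrib]
    rw [hlog]
    have := (Even.convexOn_pow (even_two)).map_sum_le
      (t := Finset.univ) (w := l)
      (p := fun h => Real.log (A h i j * A h j k * A h k i))
      (fun h _ => hl h) hsum (fun h _ => Set.mem_univ _)
    simpa [smul_eq_mul] using this
  · simp [if_neg hc]
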